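/- Assume μ is absolutely continuous with respect to Lebesgue measure and c satisfies the twist condition. Let ψ ∈ ℝ^N and λ̃ ∈ Λ satisfy λ̃^j = μ({x ∈ X : −c(x,y_j) − ψ^j = ψ^{c*}(x)}) for every 1 ≤ j ≤ N. Then the pair (ψ^{c*}, ψ) is optimal for the classical Kantorovich dual problem with marginals μ and ν_{λ̃}; that is, −∫_X ψ^{c*} dμ − ⟨λ̃, ψ⟩ = min_{γ ∈ Π(μ, ν_{λ̃})} ∫_{X×Y} c dγ. -/

import Mathlib

open MeasureTheory
open scoped ENNReal BigOperators

noncomputable section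

abbrev Euc (n : ℕ) := EuclideanSpace ℝ (Fin n)

/-- The unit simplex `Λ` in `ℝ^N`. -/
def stdSimplex' (N : ℕ) : Set (Fin N → ℝ) :=
  {l | (∀ j, 0 ≤ l j) ∧ ∑ j, l j = 1}

/-- The discrete measure `ν_λ = ∑_j λ^j δ_{y_j}`. -/
def nuOf {n N : ℕ} (y : Fin N → Euc n) (l : Fin N → ℝ) : Measure (Euc n) :=
  ∑ j, (ENNReal.ofReal (l j)) • Measure.dirac (y j)

/-- `γ ∈ Π(μ, ν)`: `γ` has first marginal `μ` and second marginal `ν`. -/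
def IsCoupling {n : ℕ} (γ : Measure (Euc n × Euc n)) (μ ν : Measure (Euc n)) : Prop :=
  γ.fst = μ ∧ γ.snd = ν

/-- The transport cost `∫ c dγ`. -/
def tCost {n : ℕ} (c : Euc n → Euc n → ℝ) (γ : Measure (Euc n × Euc n)) : ℝ :=
  ∫ p, c p.1 p.2 ∂γ

def dotp {N : ℕ} (a b : Fin N → ℝ) : ℝ := ∑ j, a j * b j

/-- Legendre transform `F*(ψ) = sup_λ (⟨λ, ψ⟩ - F(λ))`. -/
def legendre {N : ℕ} (F : (Fin N → ℝ) → EReal) (ψ : Fin N → ℝ) : EReal :=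
  ⨆ l : Fin N → ℝ, ((dotp l ψ : ℝ) : EReal) - F l

/-- `ψ^{c*}(x) = max_j (-c(x,y_j) - ψ^j)`. -/
def cstar {n N : ℕ} (c : Euc n → Euc n → ℝ) (y : Fin N → Euc n)
    (ψ : Fin N → ℝ) (x : Euc n) : ℝ :=
  ⨆ j : Fin N, (-c x (y j) - ψ j)

/-- `(ψ^{c*c})^j = sup_{x ∈ X} (-c(x,y_j) - ψ^{c*}(x))`. -/
def cstarc {n N : ℕ} (X : Set (Euc n)) (c : Euc n → Euc n → ℝ) (y : Fin N → Euc n)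
    (ψ : Fin N → ℝ) (j : Fin N) : ℝ :=
  ⨆ x ∈ X, (-c x (y j) - cstar c y ψ x)

/-- The primal objective `∫ c dγ + F(λ)`. -/
def primalObj {n N : ℕ} (c : Euc n → Euc n → ℝ) (F : (Fin N → ℝ) → EReal)
    (γ : Measure (Euc n × Euc n)) (l : Fin N → ℝ) : EReal :=
  ((tCost c γ : ℝ) : EReal) + F l

/-- The dual objective `-∫_X φ dμ - F*(ψ)`. -/
def dualObj {n N : ℕ} (X : Set (Euc n)) (μ : Measure (Euc n))
    (F : (Fin N → ℝ) → EReal) (φ : Euc n → ℝ) (ψ : Fin N → ℝ) : EReal :=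
  -(((∫ x in X, φ x ∂μ) : ℝ) : EReal) - legendre F ψ

/-- Admissibility for the dual problem: `φ ∈ C(X)` and `-φ(x) - ψ^j ≤ c(x, y_j)`. -/
def DualAdmissible {n N : ℕ} (X : Set (Euc n)) (c : Euc n → Euc n → ℝ)
    (y : Fin N → Euc n) (φ : Euc n → ℝ) (ψ : Fin N → ℝ) : Prop :=
  ContinuousOn φ X ∧ ∀ x ∈ X, ∀ j, -φ x - ψ j ≤ c x (y j)

/-- `(γ, λ)` is a minimizing pair of the primal problem. -/
def IsPrimalMin {n N : ℕ} (μ : Measure (Euc n)) (c : Euc n → Euc n → ℝ)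
    (y : Fin N → Euc n) (F : (Fin N → ℝ) → EReal)
    (γ : Measure (Euc n × Euc n)) (l : Fin N → ℝ) : Prop :=
  l ∈ stdSimplex' N ∧ IsCoupling γ μ (nuOf y l) ∧
    ∀ l' ∈ stdSimplex' N, ∀ γ', IsCoupling γ' μ (nuOf y l') →
      primalObj c F γ l ≤ primalObj c F γ' l'

/-- `(φ, ψ)` is a maximizing pair of the dual problem. -/
def IsDualMax {n N : ℕ} (X : Set (Euc n)) (μ : Measure (Euc n))
    (c : Euc n → Euc n → ℝ) (y : Fin N → Euc n) (F : (Fin N → ℝ) → EReal)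
    (φ : Euc n → ℝ) (ψ : Fin N → ℝ) : Prop :=
  DualAdmissible X c y φ ψ ∧
    ∀ φ' ψ', DualAdmissible X c y φ' ψ' → dualObj X μ F φ' ψ' ≤ dualObj X μ F φ ψ

/-- `F : ℝ^N → ℝ ∪ {+∞}` is proper, lower semicontinuous and convex. -/
def ProperLscConvex {N : ℕ} (F : (Fin N → ℝ) → EReal) : Prop :=
  LowerSemicontinuous F ∧ (∃ l, F l ≠ ⊤) ∧ (∀ l, F l ≠ ⊥) ∧
    ∀ a b : Fin N → ℝ, ∀ s t : ℝ, 0 ≤ s → 0 ≤ t → s + t = 1 →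
      F (s • a + t • b) ≤ (s : EReal) * F a + (t : EReal) * F b

/-- `F` is finite (real-valued) on the simplex `Λ`. -/
def FiniteOnSimplex {N : ℕ} (F : (Fin N → ℝ) → EReal) : Prop :=
  ∀ l ∈ stdSimplex' N, ∃ r : ℝ, F l = (r : EReal)

/-- The twist condition: `-∇_x c(x₀, y_j) ≠ -∇_x c(x₀, y_k)` for `j ≠ k`. -/
def TwistCond {n N : ℕ} (X : Set (Euc n)) (c : Euc n → Euc n → ℝ)
    (y : Fin N → Euc n) : Prop :=
  ∀ x₀ ∈ X, ∀ j k : Fin N, j ≠ k →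
    -gradient (fun x => c x (y j)) x₀ ≠ -gradient (fun x => c x (y k)) x₀

/-- `C(λ) := min_{γ ∈ Π(μ, ν_λ)} ∫ c dγ`, the optimal transport cost to `ν_λ`. -/
def kantCost {n N : ℕ} (μ : Measure (Euc n)) (c : Euc n → Euc n → ℝ)
    (y : Fin N → Euc n) (l : Fin N → ℝ) : ℝ :=
  sInf {r : ℝ | ∃ γ : Measure (Euc n × Euc n), IsCoupling γ μ (nuOf y l) ∧ r = tCost c γ}

/-- The subdifferential `∂F(λ)`. -/
def subdiff {N : ℕ} (F : (Fin N → ℝ) → EReal) (l : Fin N → ℝ) : Set (Fin N → ℝ) :=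
  {p | ∀ w : Fin N → ℝ, F l + ((dotp (w - l) p : ℝ) : EReal) ≤ F w}


lemma aux_cont_sup' {α ι : Type*} [TopologicalSpace α] (s : Finset ι) (hs : s.Nonempty)
    (f : ι → α → ℝ) (hf : ∀ i, Continuous (f i)) :
    Continuous fun x => s.sup' hs fun i => f i x := by
  induction hs using Finset.Nonempty.cons_induction with
  | singleton i => exact hf i
  | cons i s hi hs ih =>
      simp only [Finset.sup'_cons hs]; exact (hf i).max ih

lemma aux_tietze {n : ℕ} (X : Set (Euc n)) (hX : IsCompact X) (f : Euc n → ℝ)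
    (hf : ContinuousOn f X) : ∃ g : Euc n → ℝ, Continuous g ∧ ∀ x ∈ X, g x = f x := by
  obtain ⟨g, hg⟩ := ContinuousMap.exists_restrict_eq hX.isClosed
    ⟨X.restrict f, continuousOn_iff_continuous_restrict.mp hf⟩
  exact ⟨g, g.continuous, fun x hx => by
    have := ContinuousMap.congr_fun hg ⟨x, hx⟩; exact this⟩

/-- If `λ̃^j = μ({-c(·,y_j) - ψ^j = ψ^{c*}})` for all `j`, then `(ψ^{c*}, ψ)` is optimal
in the classical Kantorovich dual problem: `-∫_X ψ^{c*} dμ - ⟨λ̃, ψ⟩` equals the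
(attained) minimal transport cost between `μ` and `ν_{λ̃}`. -/
theorem ctransform_pair_is_kantorovich_dual_optimal {n N : ℕ} (hN : 0 < N)
    (X : Set (Euc n)) (hX : IsCompact X)
    (μ : Measure (Euc n)) [IsProbabilityMeasure μ] (hμX : μ Xᶜ = 0)
    (y : Fin N → Euc n) (hy : Function.Injective y)
    (c : Euc n → Euc n → ℝ) (hc : ∀ j, ContinuousOn (fun x => c x (y j)) X)
    (hc1 : ∀ j, ContDiffOn ℝ 1 (fun x => c x (y j)) X)
    (htwist : TwistCond X c y) (hac : μ ≪ volume)
    (ψ : Fin N → ℝ) (lt : Fin N → ℝ) (hltΛ : lt ∈ stdSimplex' N)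
    (hlt : ∀ j, lt j = (μ {x ∈ X | -c x (y j) - ψ j = cstar c y ψ x}).toReal) :
    (∃ γ : Measure (Euc n × Euc n), IsCoupling γ μ (nuOf y lt) ∧
      tCost c γ = kantCost μ c y lt) ∧
    -(∫ x in X, cstar c y ψ x ∂μ) - dotp lt ψ = kantCost μ c y lt := by
  classical
  haveI hNe : Nonempty (Fin N) := Fin.pos_iff_nonempty.mp hN
  have hXc : IsClosed X := hX.isClosed
  have hXm : MeasurableSet X := hXc.measurableSet
  have hμX1 : μ X = 1 := by
    have h2 := measure_add_measure_compl (μ := μ) hXm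
    rw [hμX, add_zero] at h2
    rw [h2]; exact measure_univ
  have hXne : X.Nonempty := nonempty_of_measure_ne_zero (μ := μ) (by rw [hμX1]; exact one_ne_zero)
  -- continuous extensions of the cost functions
  choose e he_cont he_eq using fun j => aux_tietze X hX (fun x => c x (y j)) (hc j)
  -- globally continuous version of cstar
  set cs : Euc n → ℝ := fun x => Finset.univ.sup' Finset.univ_nonempty fun j => -e j x - ψ j
    with hcs_def
  have hcs_cont : Continuous cs :=
    aux_cont_sup' _ _ _ fun j => ((he_cont j).neg).sub continuous_const
  have hcs_ge : ∀ x j, -e j x - ψ j ≤ cs x := fun x j =>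
    Finset.le_sup' (fun j => -e j x - ψ j) (Finset.mem_univ j)
  have hcs_att : ∀ x, ∃ j, cs x = -e j x - ψ j := fun x => by
    obtain ⟨j, -, h⟩ := Finset.exists_mem_eq_sup' Finset.univ_nonempty fun j => -e j x - ψ j
    exact ⟨j, h⟩
  have hcs_eq : ∀ x ∈ X, cs x = cstar c y ψ x := by
    intro x hx
    rw [show cstar c y ψ x = ⨆ j : Fin N, (-c x (y j) - ψ j) from rfl,
      ← Finset.sup'_univ_eq_ciSup]
    exact Finset.sup'_congr _ rfl fun j _ => by rw [he_eq j x hx]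
  -- the contact sets
  set A : Fin N → Set (Euc n) := fun j => {x ∈ X | -c x (y j) - ψ j = cstar c y ψ x}
    with hA_def
  have hA_closed : ∀ j, IsClosed (A j) := by
    intro j
    have hAalt : A j = X ∩ (fun x => (-e j x - ψ j) - cs x) ⁻¹' {0} := by
      ext x
      simp only [hA_def, Set.mem_setOf_eq, Set.mem_inter_iff, Set.mem_preimage,
        Set.mem_singleton_iff, sub_eq_zero]
      constructor
      · rintro ⟨hx, h⟩; exact ⟨hx, by rw [he_eq j x hx, hcs_eq x hx]; exact h⟩
      · rintro ⟨hx, h⟩; rw [he_eq j x hx, hcs_eq x hx] at h; exact ⟨hx, h⟩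
    rw [hAalt]
    exact hXc.inter (isClosed_singleton.preimage
      ((((he_cont j).neg).sub continuous_const).sub hcs_cont))
  have hA_meas : ∀ j, MeasurableSet (A j) := fun j => (hA_closed j).measurableSet
  have hA_sub : ∀ j, A j ⊆ X := fun j x hx => hx.1
  have hA_cover : ∀ x ∈ X, ∃ j, x ∈ A j := by
    intro x hx
    obtain ⟨j, hj⟩ := hcs_att x
    exact ⟨j, hx, by rw [← hcs_eq x hx, hj, he_eq j x hx]⟩
  -- the disjointified sets
  set B : Fin N → Set (Euc n) := fun j => A j \ ⋃ k, ⋃ (_ : k < j), A k with hB_def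
  have hB_sub : ∀ j, B j ⊆ A j := fun j => Set.diff_subset
  have hB_meas : ∀ j, MeasurableSet (B j) := fun j =>
    (hA_meas j).diff (MeasurableSet.iUnion fun k => MeasurableSet.iUnion fun _ => hA_meas k)
  have hB_disj : Pairwise (Function.onFun Disjoint B) := by
    intro i j hij
    rcases hij.lt_or_gt with h | h
    · refine Set.disjoint_left.mpr fun x hxi hxj => ?_
      exact hxj.2 (Set.mem_iUnion.mpr ⟨i, Set.mem_iUnion.mpr ⟨h, hxi.1⟩⟩)
    · refine Set.disjoint_right.mpr fun x hxj hxi => ?_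
      exact hxi.2 (Set.mem_iUnion.mpr ⟨j, Set.mem_iUnion.mpr ⟨h, hxj.1⟩⟩)
  have hB_union : (⋃ j, B j) = X := by
    apply Set.Subset.antisymm
    · exact Set.iUnion_subset fun j => (hB_sub j).trans (hA_sub j)
    · intro x hx
      obtain ⟨j0, hj0⟩ := hA_cover x hx
      set s : Finset (Fin N) := Finset.univ.filter fun j => x ∈ A j with hs_def
      have hs : s.Nonempty := ⟨j0, by simp [hs_def, hj0]⟩
      refine Set.mem_iUnion.mpr ⟨s.min' hs, ?_, ?_⟩
      · have := s.min'_mem hs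
        simp only [hs_def, Finset.mem_filter] at this
        exact this.2
      · intro hmem
        obtain ⟨k, hk⟩ := Set.mem_iUnion.mp hmem
        obtain ⟨hklt, hkA⟩ := Set.mem_iUnion.mp hk
        exact absurd (s.min'_le k (by simp [hs_def, hkA])) (not_le.mpr hklt)
  -- measure identities
  have hAne_top : ∀ j, μ (A j) ≠ ⊤ := fun j => measure_ne_top μ _
  have hofReal : ∀ j, ENNReal.ofReal (lt j) = μ (A j) := fun j => by
    rw [hlt j, ENNReal.ofReal_toReal (hAne_top j)]
  have hsumA : ∑ j, (μ (A j)).toReal = 1 := by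
    rw [Finset.sum_congr rfl fun j _ => (hlt j).symm]
    exact hltΛ.2
  have hμUB : μ (⋃ j, B j) = ∑ j, μ (B j) := by
    rw [measure_iUnion hB_disj hB_meas, tsum_fintype]
  have hsumB : ∑ j, (μ (B j)).toReal = 1 := by
    rw [← ENNReal.toReal_sum (fun j _ => measure_ne_top μ _), ← hμUB, hB_union, hμX1,
      ENNReal.toReal_one]
  have hBA : ∀ j, μ (B j) = μ (A j) := by
    have hle : ∀ j ∈ Finset.univ, (μ (B j)).toReal ≤ (μ (A j)).toReal := fun j _ =>
      ENNReal.toReal_mono (hAne_top j) (measure_mono (hB_sub j))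
    have heq := (Finset.sum_eq_sum_iff_of_le hle).mp (by rw [hsumB, hsumA])
    exact fun j => (ENNReal.toReal_eq_toReal_iff' (measure_ne_top μ _) (hAne_top j)).mp
      (heq j (Finset.mem_univ j))
  -- bounds
  choose Cb hCb using fun j => hX.exists_bound_of_continuousOn (he_cont j).continuousOn
  have hCb0 : ∀ j, 0 ≤ Cb j := fun j =>
    le_trans (norm_nonneg _) (hCb j hXne.choose hXne.choose_spec)
  obtain ⟨Dc, hDc⟩ := hX.exists_bound_of_continuousOn hcs_cont.continuousOn
  -- measurable surrogate functions
  set gg : Euc n × Euc n → ℝ :=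
    fun p => ∑ j, (X ×ˢ ({y j} : Set (Euc n))).indicator (fun q => e j q.1) p with hgg_def
  set hh : Euc n → ℝ :=
    fun z => ∑ j, ({y j} : Set (Euc n)).indicator (fun _ => -ψ j) z with hhh_def
  set ph : Euc n × Euc n → ℝ := fun p => -cs p.1 + hh p.2 with hph_def
  have hgg_meas : Measurable gg := Finset.measurable_sum _ fun j _ =>
    (((he_cont j).comp continuous_fst).measurable).indicator
      (hXm.prod (measurableSet_singleton _))
  have hhh_meas : Measurable hh := Finset.measurable_sum _ fun j _ =>
    measurable_const.indicator (measurableSet_singleton _)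
  have hgg_val : ∀ x ∈ X, ∀ j, gg (x, y j) = c x (y j) := by
    intro x hx j
    simp only [hgg_def]
    rw [Finset.sum_eq_single j]
    · have hmem : (x, y j) ∈ X ×ˢ ({y j} : Set (Euc n)) := ⟨hx, rfl⟩
      rw [Set.indicator_of_mem hmem]
      exact he_eq j x hx
    · intro k _ hkj
      refine Set.indicator_of_notMem ?_ _
      rintro ⟨-, hk2⟩
      exact hkj (hy (Set.mem_singleton_iff.mp hk2).symm)
    · exact fun habs => absurd (Finset.mem_univ j) habs
  have hhh_val : ∀ j, hh (y j) = -ψ j := by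
    intro j
    simp only [hhh_def]
    rw [Finset.sum_eq_single j]
    · have hmem : y j ∈ ({y j} : Set (Euc n)) := rfl
      rw [Set.indicator_of_mem hmem]
    · intro k _ hkj
      refine Set.indicator_of_notMem ?_ _
      intro hk2
      exact hkj (hy (Set.mem_singleton_iff.mp hk2).symm)
    · exact fun habs => absurd (Finset.mem_univ j) habs
  have hgg_bdd : ∀ p, ‖gg p‖ ≤ ∑ j, Cb j := by
    intro p
    refine (norm_sum_le _ _).trans (Finset.sum_le_sum fun j _ => ?_)
    by_cases hp : p ∈ X ×ˢ ({y j} : Set (Euc n))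
    · rw [Set.indicator_of_mem hp]; exact hCb j p.1 hp.1
    · rw [Set.indicator_of_notMem hp]; simpa using hCb0 j
  have hhh_bdd : ∀ z, ‖hh z‖ ≤ ∑ j, ‖ψ j‖ := by
    intro z
    refine (norm_sum_le _ _).trans (Finset.sum_le_sum fun j _ => ?_)
    by_cases hp : z ∈ ({y j} : Set (Euc n))
    · rw [Set.indicator_of_mem hp]; rw [norm_neg]
    · rw [Set.indicator_of_notMem hp]; simp
  -- the key computation, valid for every coupling
  have key : ∀ γ : Measure (Euc n × Euc n), IsCoupling γ μ (nuOf y lt) →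
      tCost c γ = ∫ p, gg p ∂γ ∧ Integrable gg γ ∧ Integrable ph γ ∧ ph ≤ᵐ[γ] gg ∧
      ∫ p, ph p ∂γ = -(∫ x in X, cstar c y ψ x ∂μ) - dotp lt ψ := by
    intro γ hγ
    obtain ⟨hfst, hsnd⟩ := hγ
    haveI : IsProbabilityMeasure γ := by
      constructor
      have h1 : γ.fst Set.univ = γ Set.univ := Measure.fst_univ
      rw [← h1, hfst]; exact measure_univ
    have haeX : ∀ᵐ p ∂γ, p.1 ∈ X := by
      have h0 : γ (Prod.fst ⁻¹' Xᶜ) = 0 := by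
        rw [← Measure.fst_apply hXm.compl, hfst]; exact hμX
      rw [ae_iff]; exact h0
    have hSm : MeasurableSet {z : Euc n | ¬∃ j, z = y j} := by
      have hset : {z : Euc n | ¬∃ j, z = y j} = (⋃ j, ({y j} : Set (Euc n)))ᶜ := by
        ext z; simp [eq_comm]
      rw [hset]
      exact (MeasurableSet.iUnion fun j => measurableSet_singleton _).compl
    have haeY : ∀ᵐ p ∂γ, ∃ j, p.2 = y j := by
      have h0 : (nuOf y lt) {z | ¬∃ j, z = y j} = 0 := by
        rw [show nuOf y lt = ∑ j, ENNReal.ofReal (lt j) • Measure.dirac (y j) from rfl,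
          Measure.finset_sum_apply]
        refine Finset.sum_eq_zero fun j _ => ?_
        rw [Measure.smul_apply, Measure.dirac_apply' _ hSm,
          Set.indicator_of_notMem (by simp), smul_zero]
      have h1 : γ (Prod.snd ⁻¹' {z | ¬∃ j, z = y j}) = 0 := by
        rw [← Measure.snd_apply hSm, hsnd]; exact h0
      rw [ae_iff]; exact h1
    have hae : ∀ᵐ p ∂γ, p.1 ∈ X ∧ ∃ j, p.2 = y j := haeX.and haeY
    have hcg : (fun p : Euc n × Euc n => c p.1 p.2) =ᵐ[γ] gg := by
      filter_upwards [hae] with p hp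
      obtain ⟨hp1, j, hj⟩ := hp
      have hp' : p = (p.1, y j) := by rw [← hj]
      rw [hp']
      exact (hgg_val p.1 hp1 j).symm
    have hphg : ph ≤ᵐ[γ] gg := by
      filter_upwards [hae] with p hp
      obtain ⟨hp1, j, hj⟩ := hp
      have hp' : p = (p.1, y j) := by rw [← hj]
      rw [hp']
      have h1 := hcs_ge p.1 j
      have h2 := he_eq j p.1 hp1
      have h3 := hgg_val p.1 hp1 j
      have h4 := hhh_val j
      show -cs p.1 + hh (y j) ≤ gg (p.1, y j)
      rw [h3, h4]
      linarith
    have hgg_int : Integrable gg γ :=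
      Integrable.mono' (integrable_const (∑ j, Cb j)) hgg_meas.aestronglyMeasurable
        (ae_of_all _ hgg_bdd)
    have hcs_int : Integrable (fun p : Euc n × Euc n => cs p.1) γ := by
      refine Integrable.mono' (integrable_const Dc)
        (hcs_cont.comp continuous_fst).measurable.aestronglyMeasurable ?_
      filter_upwards [haeX] with p hp using hDc p.1 hp
    have hhh_int : Integrable (fun p : Euc n × Euc n => hh p.2) γ :=
      Integrable.mono' (integrable_const (∑ j, ‖ψ j‖))
        (hhh_meas.comp measurable_snd).aestronglyMeasurable
        (ae_of_all _ fun p => hhh_bdd p.2)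
    have hph_int : Integrable ph γ := by
      have := hcs_int.neg.add hhh_int
      exact this
    have hint_cs : ∫ p : Euc n × Euc n, cs p.1 ∂γ = ∫ x in X, cstar c y ψ x ∂μ := by
      have h1 : ∫ p : Euc n × Euc n, cs p.1 ∂γ = ∫ x, cs x ∂(γ.map Prod.fst) :=
        (integral_map measurable_fst.aemeasurable hcs_cont.aestronglyMeasurable).symm
      have h2 : γ.map Prod.fst = μ := hfst
      have hres : μ.restrict X = μ :=
        Measure.restrict_eq_self_of_ae_mem (by rw [ae_iff]; exact hμX)
      rw [h1, h2, show (∫ x in X, cstar c y ψ x ∂μ) = ∫ x in X, cs x ∂μ from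
        setIntegral_congr_fun hXm fun x hx => (hcs_eq x hx).symm, hres]
    have hint_h : ∫ p : Euc n × Euc n, hh p.2 ∂γ = -dotp lt ψ := by
      have h1 : ∫ p : Euc n × Euc n, hh p.2 ∂γ = ∫ z, hh z ∂(nuOf y lt) := by
        rw [← hsnd]
        exact (integral_map measurable_snd.aemeasurable
          hhh_meas.aestronglyMeasurable).symm
      have hint : ∀ j ∈ Finset.univ, Integrable hh (ENNReal.ofReal (lt j) • Measure.dirac (y j)) := by
        intro j _
        refine Integrable.smul_measure ?_ ENNReal.ofReal_ne_top
        exact Integrable.mono' (integrable_const (∑ k, ‖ψ k‖)) hhh_meas.aestronglyMeasurable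
          (ae_of_all _ fun z => hhh_bdd z)
      rw [h1, show nuOf y lt = ∑ j, ENNReal.ofReal (lt j) • Measure.dirac (y j) from rfl,
        integral_finset_sum_measure hint]
      have h2 : ∀ j ∈ Finset.univ, ∫ z, hh z ∂(ENNReal.ofReal (lt j) • Measure.dirac (y j))
          = lt j * (-ψ j) := by
        intro j _
        rw [integral_smul_measure, ENNReal.toReal_ofReal (hltΛ.1 j), integral_dirac,
          hhh_val j, smul_eq_mul]
      rw [Finset.sum_congr rfl h2, dotp, ← Finset.sum_neg_distrib]
      exact Finset.sum_congr rfl fun j _ => by ring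
    have hph_val : ∫ p, ph p ∂γ = -(∫ x in X, cstar c y ψ x ∂μ) - dotp lt ψ := by
      have hsplit : ∫ p, ph p ∂γ
          = ∫ p : Euc n × Euc n, -cs p.1 ∂γ + ∫ p : Euc n × Euc n, hh p.2 ∂γ := by
        rw [hph_def]
        exact integral_add hcs_int.neg hhh_int
      rw [hsplit, integral_neg, hint_cs, hint_h, sub_eq_add_neg]
    have htc : tCost c γ = ∫ p, gg p ∂γ := integral_congr_ae hcg
    exact ⟨htc, hgg_int, hph_int, hphg, hph_val⟩
  -- the explicit optimal coupling
  set γs : Measure (Euc n × Euc n) := ∑ j, (μ.restrict (B j)).map (fun x => (x, y j))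
    with hγs_def
  have hmapm : ∀ j, Measurable fun x : Euc n => (x, y j) := fun j =>
    measurable_id.prodMk measurable_const
  have hγs_apply : ∀ s : Set (Euc n × Euc n), MeasurableSet s →
      γs s = ∑ j, μ.restrict (B j) ((fun x => (x, y j)) ⁻¹' s) := by
    intro s hs
    rw [hγs_def, Measure.finset_sum_apply]
    exact Finset.sum_congr rfl fun j _ => Measure.map_apply (hmapm j) hs
  have hcoup : IsCoupling γs μ (nuOf y lt) := by
    constructor
    · refine Measure.ext fun s hs => ?_
      rw [Measure.fst_apply hs, hγs_apply _ (hs.preimage measurable_fst)]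
      have hdisj : Pairwise (Function.onFun Disjoint fun j => s ∩ B j) :=
        hB_disj.mono fun i j h => h.mono Set.inter_subset_right Set.inter_subset_right
      calc ∑ j, μ.restrict (B j) ((fun x : Euc n => (x, y j)) ⁻¹' (Prod.fst ⁻¹' s))
          = ∑ j, μ (s ∩ B j) := by
            refine Finset.sum_congr rfl fun j _ => ?_
            rw [show (fun x : Euc n => (x, y j)) ⁻¹' (Prod.fst ⁻¹' s) = s from rfl,
              Measure.restrict_apply hs]
        _ = μ (⋃ j, s ∩ B j) := by
            rw [measure_iUnion hdisj fun j => hs.inter (hB_meas j), tsum_fintype]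
        _ = μ (s ∩ X) := by rw [← Set.inter_iUnion, hB_union]
        _ = μ s := by
            have hd := measure_inter_add_diff (μ := μ) s hXm
            have h0 : μ (s \ X) = 0 :=
              measure_mono_null (fun x hx => hx.2) hμX
            rw [← hd, h0, add_zero]
    · refine Measure.ext fun s hs => ?_
      rw [Measure.snd_apply hs, hγs_apply _ (hs.preimage measurable_snd),
        show nuOf y lt = ∑ j, ENNReal.ofReal (lt j) • Measure.dirac (y j) from rfl,
        Measure.finset_sum_apply]
      refine Finset.sum_congr rfl fun j _ => ?_
      have hpre : (fun x : Euc n => (x, y j)) ⁻¹' (Prod.snd ⁻¹' s)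
          = if y j ∈ s then Set.univ else ∅ := by
        split_ifs with h <;> ext x <;> simp [h]
      rw [hpre, Measure.smul_apply, Measure.dirac_apply' _ hs, smul_eq_mul, hofReal j,
        ← hBA j]
      split_ifs with h
      · rw [Measure.restrict_apply_univ, Set.indicator_of_mem h, Pi.one_apply, mul_one]
      · rw [measure_empty, Set.indicator_of_notMem h, mul_zero]
  have hconc : ∀ᵐ p ∂γs, ∃ j, p.1 ∈ B j ∧ p.2 = y j := by
    rw [ae_iff]
    have hSm2 : MeasurableSet {p : Euc n × Euc n | ¬∃ j, p.1 ∈ B j ∧ p.2 = y j} := by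
      have hset : {p : Euc n × Euc n | ¬∃ j, p.1 ∈ B j ∧ p.2 = y j}
          = (⋃ j, (B j) ×ˢ ({y j} : Set (Euc n)))ᶜ := by
        ext p
        simp only [Set.mem_setOf_eq, Set.mem_compl_iff, Set.mem_iUnion, Set.mem_prod,
          Set.mem_singleton_iff, not_exists, not_and]
      rw [hset]
      exact (MeasurableSet.iUnion fun j => (hB_meas j).prod (measurableSet_singleton _)).compl
    rw [hγs_apply _ hSm2]
    refine Finset.sum_eq_zero fun j _ => ?_
    rw [Measure.restrict_apply' (hB_meas j)]
    have hempty : ((fun x : Euc n => (x, y j)) ⁻¹'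
        {p : Euc n × Euc n | ¬∃ k, p.1 ∈ B k ∧ p.2 = y k}) ∩ B j = ∅ := by
      rw [Set.eq_empty_iff_forall_notMem]
      rintro x ⟨hx1, hx2⟩
      exact hx1 ⟨j, hx2, rfl⟩
    rw [hempty, measure_empty]
  have hgph : gg =ᵐ[γs] ph := by
    filter_upwards [hconc] with p hp
    obtain ⟨j, hpB, hpy⟩ := hp
    have hpX : p.1 ∈ X := hA_sub j (hB_sub j hpB)
    have hp' : p = (p.1, y j) := by rw [← hpy]
    have hAj : -c p.1 (y j) - ψ j = cstar c y ψ p.1 := (hB_sub j hpB).2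
    have hc1 := hcs_eq p.1 hpX
    have hc2 := hgg_val p.1 hpX j
    have hc3 := hhh_val j
    rw [hp', hc2]
    show c p.1 (y j) = -cs p.1 + hh (y j)
    rw [hc3]
    linarith
  obtain ⟨htc_s, -, hphint_s, -, hphval_s⟩ := key γs hcoup
  have hVeq : tCost c γs = -(∫ x in X, cstar c y ψ x ∂μ) - dotp lt ψ := by
    rw [htc_s, integral_congr_ae hgph, hphval_s]
  have hlbS : ∀ r ∈ {r : ℝ | ∃ γ : Measure (Euc n × Euc n),
      IsCoupling γ μ (nuOf y lt) ∧ r = tCost c γ},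
      -(∫ x in X, cstar c y ψ x ∂μ) - dotp lt ψ ≤ r := by
    rintro r ⟨γ, hγ, rfl⟩
    obtain ⟨htc, hggint, hphint, hle, hphval⟩ := key γ hγ
    rw [htc, ← hphval]
    exact integral_mono_ae hphint hggint hle
  have hVmem : -(∫ x in X, cstar c y ψ x ∂μ) - dotp lt ψ ∈ {r : ℝ | ∃ γ : Measure (Euc n × Euc n),
      IsCoupling γ μ (nuOf y lt) ∧ r = tCost c γ} := ⟨γs, hcoup, hVeq.symm⟩
  have hkc : kantCost μ c y lt = -(∫ x in X, cstar c y ψ x ∂μ) - dotp lt ψ := by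
    rw [kantCost]
    exact le_antisymm (csInf_le ⟨_, hlbS⟩ hVmem) (le_csInf ⟨_, hVmem⟩ hlbS)
  exact ⟨⟨γs, hcoup, hVeq.trans hkc.symm⟩, hkc.symm⟩

end
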